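/- The integral $\int_0^\infty \int_{-\infty}^{\infty} \overline{\Phi}(|z - y| + y)^2 / \varphi(z)\, dz\, dy$ equals $(\sqrt{2} - \log(1 + \sqrt{2}))/\sqrt{\pi}$. -/

import Mathlib

open MeasureTheory Set Filter Real intervalIntegral
open scoped Topology ENNReal

noncomputable def stdPhi (z : ℝ) : ℝ := (Real.sqrt (2 * Real.pi))⁻¹ * Real.exp (-z ^ 2 / 2)

noncomputable def stdPhiBar (z : ℝ) : ℝ := ∫ u in Set.Ioi z, stdPhi u

lemma stdPhi_pos (z : ℝ) : 0 < stdPhi z := by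
  unfold stdPhi
  positivity

lemma continuous_stdPhi : Continuous stdPhi := by
  unfold stdPhi
  continuity

lemma integrable_stdPhi : Integrable stdPhi := by
  unfold stdPhi
  have : Integrable (fun z : ℝ => Real.exp (-(1/2) * z ^ 2)) := integrable_exp_neg_mul_sq (by norm_num)
  refine (this.const_mul ((Real.sqrt (2 * Real.pi))⁻¹)).congr (Filter.EventuallyEq.of_eq ?_)
  funext z
  rw [show -(1/2) * z ^ 2 = -z ^ 2 / 2 by ring]

lemma hasDerivAt_stdPhi (z : ℝ) : HasDerivAt stdPhi (-z * stdPhi z) z := by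
  unfold stdPhi
  have h : HasDerivAt (fun z : ℝ => -z ^ 2 / 2) (-z) z := by
    have := (hasDerivAt_pow 2 z).neg.div_const 2
    refine this.congr_deriv ?_
    push_cast; ring
  have := (h.exp).const_mul (Real.sqrt (2 * Real.pi))⁻¹
  refine this.congr_deriv ?_
  ring

lemma stdPhiBar_nonneg (z : ℝ) : 0 ≤ stdPhiBar z :=
  setIntegral_nonneg measurableSet_Ioi fun t _ => (stdPhi_pos t).le

lemma stdPhiBar_add (a b : ℝ) (hab : a ≤ b) :
    stdPhiBar a = (∫ t in a..b, stdPhi t) + stdPhiBar b := by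
  rw [intervalIntegral.integral_of_le hab, stdPhiBar, stdPhiBar,
    ← Set.Ioc_union_Ioi_eq_Ioi hab,
    setIntegral_union (Set.Ioc_disjoint_Ioi le_rfl) measurableSet_Ioi
      integrable_stdPhi.integrableOn integrable_stdPhi.integrableOn]

lemma stdPhiBar_eq (z : ℝ) : stdPhiBar z = stdPhiBar 0 - ∫ t in (0:ℝ)..z, stdPhi t := by
  rcases le_total 0 z with h | h
  · rw [stdPhiBar_add 0 z h]; ring
  · rw [stdPhiBar_add z 0 h, intervalIntegral.integral_symm]; ring

lemma hasDerivAt_stdPhiBar (z : ℝ) : HasDerivAt stdPhiBar (-stdPhi z) z := by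
  have h : HasDerivAt (fun u => ∫ t in (0:ℝ)..u, stdPhi t) (stdPhi z) z :=
    intervalIntegral.integral_hasDerivAt_right
      (integrable_stdPhi.intervalIntegrable)
      (continuous_stdPhi.aestronglyMeasurable.stronglyMeasurableAtFilter)
      continuous_stdPhi.continuousAt
  have := (hasDerivAt_const z (stdPhiBar 0)).sub h
  simp only [zero_sub] at this
  refine HasDerivAt.congr_of_eventuallyEq this ?_
  filter_upwards with u using stdPhiBar_eq u

lemma continuous_stdPhiBar : Continuous stdPhiBar := by
  have : Differentiable ℝ stdPhiBar := fun z => (hasDerivAt_stdPhiBar z).differentiableAt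
  exact this.continuous

lemma integral_tail_moment {z : ℝ} (hz : 0 ≤ z) :
    ∫ t in Set.Ioi z, t * stdPhi t = stdPhi z := by
  have h := integral_Ioi_of_hasDerivAt_of_nonneg (g := fun t => -stdPhi t)
    (g' := fun t => t * stdPhi t) (a := z) (l := 0) ?_ ?_ ?_ ?_
  · rw [h]; ring
  · exact (continuous_stdPhi.neg.continuousWithinAt)
  · intro x _
    have := (hasDerivAt_stdPhi x).neg
    exact this.congr_deriv (by ring)
  · intro x hx
    exact mul_nonneg (le_of_lt (lt_of_le_of_lt hz hx)) (stdPhi_pos x).le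
  · -- Tendsto (fun t => -stdPhi t) atTop (𝓝 0)
    rw [show (0:ℝ) = -0 by ring]
    refine Tendsto.neg ?_
    unfold stdPhi
    rw [show (0:ℝ) = (Real.sqrt (2*Real.pi))⁻¹ * 0 by ring]
    refine Tendsto.const_mul _ ?_
    refine Real.tendsto_exp_atBot.comp ?_
    have : Tendsto (fun z : ℝ => z ^ 2 / 2) atTop atTop :=
      (tendsto_pow_atTop (by norm_num)).atTop_div_const (by norm_num)
    have h2 : Tendsto (fun z : ℝ => -(z ^ 2 / 2)) atTop atBot := tendsto_neg_atBot_iff.mpr this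
    refine h2.congr fun z => by ring

lemma tendsto_stdPhi_atTop : Tendsto stdPhi atTop (𝓝 0) := by
  unfold stdPhi
  rw [show (0:ℝ) = (Real.sqrt (2*Real.pi))⁻¹ * 0 by ring]
  refine Tendsto.const_mul _ ?_
  refine Real.tendsto_exp_atBot.comp ?_
  have h : Tendsto (fun z : ℝ => z ^ 2 / 2) atTop atTop :=
    (tendsto_pow_atTop (by norm_num)).atTop_div_const (by norm_num)
  have h2 : Tendsto (fun z : ℝ => -(z ^ 2 / 2)) atTop atBot := tendsto_neg_atBot_iff.mpr h
  exact h2.congr fun z => by ring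

lemma integrableOn_tail_moment {z : ℝ} (hz : 0 ≤ z) :
    IntegrableOn (fun t => t * stdPhi t) (Set.Ioi z) := by
  refine integrableOn_Ioi_deriv_of_nonneg (g := fun t => -stdPhi t) (l := 0) ?_ ?_ ?_ ?_
  · exact continuous_stdPhi.neg.continuousWithinAt
  · intro x _; exact (hasDerivAt_stdPhi x).neg.congr_deriv (by ring)
  · intro x hx; exact mul_nonneg (le_of_lt (lt_of_le_of_lt hz hx)) (stdPhi_pos x).le
  · simpa using tendsto_stdPhi_atTop.neg

lemma stdPhiBar_le {z : ℝ} (hz : 0 < z) : stdPhiBar z ≤ stdPhi z / z := by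
  have h1 : stdPhiBar z ≤ ∫ t in Set.Ioi z, (t / z) * stdPhi t := by
    refine setIntegral_mono_on integrable_stdPhi.integrableOn ?_ measurableSet_Ioi ?_
    · have := (integrableOn_tail_moment hz.le).const_mul (1/z)
      refine this.congr (Filter.EventuallyEq.of_eq (funext fun t => by ring))
    · intro t ht
      have h2 : (1:ℝ) ≤ t / z := (one_le_div hz).mpr (le_of_lt ht)
      nlinarith [stdPhi_pos t, (stdPhi_pos t).le]
  have h2 : ∫ t in Set.Ioi z, (t / z) * stdPhi t = stdPhi z / z := by
    rw [show (fun t => (t / z) * stdPhi t) = fun t => (1/z) * (t * stdPhi t) by funext t; ring]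
    rw [MeasureTheory.integral_const_mul, integral_tail_moment hz.le]; ring
  linarith

noncomputable def Efun (z : ℝ) : ℝ := ∫ t in (0:ℝ)..z, Real.exp (t ^ 2 / 2)

lemma continuous_exp_sq : Continuous (fun t : ℝ => Real.exp (t ^ 2 / 2)) := by continuity

lemma hasDerivAt_Efun (z : ℝ) : HasDerivAt Efun (Real.exp (z ^ 2 / 2)) z :=
  intervalIntegral.integral_hasDerivAt_right
    (continuous_exp_sq.intervalIntegrable _ _)
    (continuous_exp_sq.aestronglyMeasurable.stronglyMeasurableAtFilter)
    continuous_exp_sq.continuousAt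

lemma continuous_Efun : Continuous Efun := by
  have : Differentiable ℝ Efun := fun z => (hasDerivAt_Efun z).differentiableAt
  exact this.continuous

lemma Efun_zero : Efun 0 = 0 := intervalIntegral.integral_same

lemma Efun_nonneg {z : ℝ} (hz : 0 ≤ z) : 0 ≤ Efun z :=
  intervalIntegral.integral_nonneg hz fun t _ => (Real.exp_pos _).le

lemma Efun_le {z : ℝ} (hz : 0 ≤ z) : Efun z ≤ z * Real.exp (z ^ 2 / 2) := by
  have h : Efun z ≤ ∫ _t in (0:ℝ)..z, Real.exp (z ^ 2 / 2) := by
    refine intervalIntegral.integral_mono_on hz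
      (continuous_exp_sq.intervalIntegrable _ _)
      (intervalIntegrable_const) ?_
    intro t ht
    refine Real.exp_le_exp.mpr ?_
    have h1 : 0 ≤ t := ht.1
    have h2 : t ≤ z := ht.2
    nlinarith
  simpa using h

lemma stdPhi_inv (w : ℝ) : (stdPhi w)⁻¹ = Real.sqrt (2 * Real.pi) * Real.exp (w ^ 2 / 2) := by
  unfold stdPhi
  rw [mul_inv, inv_inv, ← Real.exp_neg]
  congr 1
  ring

lemma int_inv_phi {z : ℝ} (hz : 0 < z) :
    ∫ y in (0:ℝ)..z, (stdPhi (2 * y - z))⁻¹ = Real.sqrt (2 * Real.pi) * Efun z := by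
  have h1 : ∀ y : ℝ, (stdPhi (2 * y - z))⁻¹
      = Real.sqrt (2 * Real.pi) * Real.exp ((2 * y + -z) ^ 2 / 2) := by
    intro y; rw [stdPhi_inv]; ring_nf
  simp only [h1]
  rw [intervalIntegral.integral_const_mul]
  have h2 := intervalIntegral.integral_comp_mul_add
    (f := fun u => Real.exp (u ^ 2 / 2)) (a := (0:ℝ)) (b := z) (c := 2) (d := -z) two_ne_zero
  rw [h2]
  have h3 : (2:ℝ) * 0 + -z = -z := by ring
  have h4 : (2:ℝ) * z + -z = z := by ring
  rw [h3, h4]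
  have h5 : (∫ u in (-z)..(z:ℝ), Real.exp (u ^ 2 / 2))
      = (∫ u in (-z)..(0:ℝ), Real.exp (u ^ 2 / 2)) + ∫ u in (0:ℝ)..z, Real.exp (u ^ 2 / 2) :=
    (intervalIntegral.integral_add_adjacent_intervals
      (continuous_exp_sq.intervalIntegrable _ _) (continuous_exp_sq.intervalIntegrable _ _)).symm
  have h6 : (∫ u in (-z)..(0:ℝ), Real.exp (u ^ 2 / 2)) = ∫ u in (0:ℝ)..z, Real.exp (u ^ 2 / 2) := by
    have := intervalIntegral.integral_comp_neg (a := (0:ℝ)) (b := z)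
      (fun u => Real.exp (u ^ 2 / 2))
    simp only [neg_zero] at this
    rw [← this]
    congr 1
    funext u
    rw [neg_pow]
    norm_num
  rw [h5, h6, Efun]
  rw [smul_eq_mul]
  ring

lemma integrableOn_zExp : IntegrableOn (fun z : ℝ => z * Real.exp (-z ^ 2 / 2)) (Set.Ioi 0) := by
  have := (integrableOn_tail_moment (z := 0) le_rfl).const_mul (Real.sqrt (2 * Real.pi))
  refine this.congr (Filter.EventuallyEq.of_eq (funext fun t => ?_))
  unfold stdPhi
  rw [← mul_assoc, mul_comm (Real.sqrt (2*Real.pi)) t, mul_assoc, ← mul_assoc (Real.sqrt (2*Real.pi)),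
    mul_inv_cancel₀ (by positivity), one_mul]

lemma tendsto_expNegSq : Tendsto (fun z : ℝ => Real.exp (-z ^ 2 / 2)) atTop (𝓝 0) := by
  refine Real.tendsto_exp_atBot.comp ?_
  have h : Tendsto (fun z : ℝ => z ^ 2 / 2) atTop atTop :=
    (tendsto_pow_atTop (by norm_num)).atTop_div_const (by norm_num)
  have h2 : Tendsto (fun z : ℝ => -(z ^ 2 / 2)) atTop atBot := tendsto_neg_atBot_iff.mpr h
  exact h2.congr fun z => by ring

lemma sqrt_two_pi_phi (z : ℝ) : Real.sqrt (2 * Real.pi) * stdPhi z = Real.exp (-z ^ 2 / 2) := by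
  unfold stdPhi
  rw [← mul_assoc, mul_inv_cancel₀ (by positivity), one_mul]

lemma phi_sq_exp (z : ℝ) : stdPhi z ^ 2 * Real.exp (z ^ 2 / 2)
    = (2 * Real.pi)⁻¹ * Real.exp (-z ^ 2 / 2) := by
  unfold stdPhi
  rw [mul_pow, ← Real.exp_nat_mul, inv_pow, sq_sqrt (by positivity)]
  rw [mul_assoc, ← Real.exp_add]
  congr 2
  ring

noncomputable def Wfun (z : ℝ) : ℝ :=
  stdPhiBar z ^ 2 * (Real.sqrt (2 * Real.pi) * (Efun z + z * Real.exp (z ^ 2 / 2)))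

noncomputable def Gfun (z : ℝ) : ℝ :=
  2 * stdPhiBar z * stdPhi z * (Real.sqrt (2 * Real.pi) * (z * Efun z))

noncomputable def Ffun (z : ℝ) : ℝ :=
  stdPhiBar z ^ 2 * (Real.sqrt (2 * Real.pi) * (z * Efun z))

lemma continuous_Wfun : Continuous Wfun := by
  unfold Wfun
  exact ((continuous_stdPhiBar.pow 2).mul (continuous_const.mul
    (continuous_Efun.add (continuous_id.mul continuous_exp_sq))))

attribute [fun_prop] continuous_stdPhiBar continuous_stdPhi continuous_Efun

lemma continuous_Gfun : Continuous Gfun := by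
  unfold Gfun
  fun_prop

lemma continuous_Ffun : Continuous Ffun := by
  unfold Ffun
  fun_prop

lemma hasDerivAt_Ffun (z : ℝ) : HasDerivAt Ffun (Wfun z - Gfun z) z := by
  have h1 : HasDerivAt (fun z => stdPhiBar z ^ 2) (2 * stdPhiBar z * (-stdPhi z)) z := by
    exact ((hasDerivAt_stdPhiBar z).pow 2).congr_deriv (by push_cast; ring)
  have h2 : HasDerivAt (fun z : ℝ => z * Efun z) (Efun z + z * Real.exp (z ^ 2 / 2)) z := by
    have := (hasDerivAt_id z).mul (hasDerivAt_Efun z)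
    exact this.congr_deriv (by simp)
  have h3 : HasDerivAt (fun z : ℝ => Real.sqrt (2 * Real.pi) * (z * Efun z))
      (Real.sqrt (2 * Real.pi) * (Efun z + z * Real.exp (z ^ 2 / 2))) z := h2.const_mul _
  have := h1.mul h3
  unfold Ffun Wfun Gfun
  refine this.congr_deriv ?_
  ring

lemma Wfun_nonneg {z : ℝ} (hz : 0 ≤ z) : 0 ≤ Wfun z := by
  unfold Wfun
  have := stdPhiBar_nonneg z
  have := Efun_nonneg hz
  have := Real.sqrt_nonneg (2 * Real.pi)
  positivity

lemma Gfun_nonneg {z : ℝ} (hz : 0 ≤ z) : 0 ≤ Gfun z := by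
  unfold Gfun
  have := stdPhiBar_nonneg z
  have := Efun_nonneg hz
  have := (stdPhi_pos z).le
  have := Real.sqrt_nonneg (2 * Real.pi)
  positivity

lemma Ffun_nonneg {z : ℝ} (hz : 0 ≤ z) : 0 ≤ Ffun z := by
  unfold Ffun
  have := stdPhiBar_nonneg z
  have := Efun_nonneg hz
  have := Real.sqrt_nonneg (2 * Real.pi)
  positivity

lemma Ffun_le {z : ℝ} (hz : 0 < z) :
    Ffun z ≤ Real.sqrt (2 * Real.pi) * ((2 * Real.pi)⁻¹ * Real.exp (-z ^ 2 / 2)) := by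
  unfold Ffun
  have h1 : stdPhiBar z ^ 2 ≤ (stdPhi z / z) ^ 2 := by
    refine pow_le_pow_left₀ (stdPhiBar_nonneg z) (stdPhiBar_le hz) 2
  have h2 : z * Efun z ≤ z * (z * Real.exp (z ^ 2 / 2)) :=
    mul_le_mul_of_nonneg_left (Efun_le hz.le) hz.le
  have h3 : stdPhiBar z ^ 2 * (Real.sqrt (2 * Real.pi) * (z * Efun z))
      ≤ (stdPhi z / z) ^ 2 * (Real.sqrt (2 * Real.pi) * (z * (z * Real.exp (z ^ 2 / 2)))) := by
    refine mul_le_mul h1 (mul_le_mul_of_nonneg_left h2 (Real.sqrt_nonneg _)) ?_ ?_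
    · have := stdPhiBar_nonneg z
      have := Efun_nonneg hz.le
      have := Real.sqrt_nonneg (2 * Real.pi)
      positivity
    · positivity
  refine h3.trans ?_
  have h4 : (stdPhi z / z) ^ 2 * (Real.sqrt (2 * Real.pi) * (z * (z * Real.exp (z ^ 2 / 2))))
      = Real.sqrt (2 * Real.pi) * (stdPhi z ^ 2 * Real.exp (z ^ 2 / 2)) := by
    field_simp
  rw [h4, phi_sq_exp]

lemma tendsto_Ffun : Tendsto Ffun atTop (𝓝 0) := by
  have h0 : Tendsto (fun z : ℝ => Real.sqrt (2 * Real.pi) *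
      ((2 * Real.pi)⁻¹ * Real.exp (-z ^ 2 / 2))) atTop (𝓝 0) := by
    have := (tendsto_expNegSq.const_mul ((2 * Real.pi)⁻¹)).const_mul (Real.sqrt (2 * Real.pi))
    simpa using this
  refine tendsto_of_tendsto_of_tendsto_of_le_of_le' tendsto_const_nhds h0 ?_ ?_
  · filter_upwards [eventually_gt_atTop (0:ℝ)] with z hz using Ffun_nonneg hz.le
  · filter_upwards [eventually_gt_atTop (0:ℝ)] with z hz using Ffun_le hz

lemma Gfun_le {z : ℝ} (hz : 0 < z) :
    Gfun z ≤ 2 * Real.sqrt (2 * Real.pi) * ((2 * Real.pi)⁻¹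
      * (z * Real.exp (-z ^ 2 / 2))) := by
  unfold Gfun
  have hb : stdPhiBar z ≤ stdPhi z / z := stdPhiBar_le hz
  have hE : Efun z ≤ z * Real.exp (z ^ 2 / 2) := Efun_le hz.le
  have h1 : 2 * stdPhiBar z * stdPhi z * (Real.sqrt (2 * Real.pi) * (z * Efun z))
      ≤ 2 * (stdPhi z / z) * stdPhi z * (Real.sqrt (2 * Real.pi)
        * (z * (z * Real.exp (z ^ 2 / 2)))) := by
    have h2 : 0 ≤ stdPhi z := (stdPhi_pos z).le
    have h3 : 0 ≤ Real.sqrt (2 * Real.pi) := Real.sqrt_nonneg _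
    have h4 := stdPhiBar_nonneg z
    have h5 := Efun_nonneg hz.le
    refine mul_le_mul (by nlinarith) ?_ (by positivity) (by positivity)
    exact mul_le_mul_of_nonneg_left (mul_le_mul_of_nonneg_left hE hz.le) h3
  refine h1.trans (le_of_eq ?_)
  have h6 : 2 * (stdPhi z / z) * stdPhi z * (Real.sqrt (2 * Real.pi)
      * (z * (z * Real.exp (z ^ 2 / 2))))
      = 2 * Real.sqrt (2 * Real.pi) * (z * (stdPhi z ^ 2 * Real.exp (z ^ 2 / 2))) := by
    field_simp
  rw [h6, phi_sq_exp]
  ring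

lemma Wfun_le {z : ℝ} (hz : 1 ≤ z) :
    Wfun z ≤ 2 * Real.sqrt (2 * Real.pi) * ((2 * Real.pi)⁻¹ * Real.exp (-z ^ 2 / 2)) := by
  have hz0 : 0 < z := lt_of_lt_of_le one_pos hz
  unfold Wfun
  have hb : stdPhiBar z ≤ stdPhi z / z := stdPhiBar_le hz0
  have hE : Efun z + z * Real.exp (z ^ 2 / 2) ≤ 2 * z * Real.exp (z ^ 2 / 2) := by
    have := Efun_le hz0.le
    linarith
  have h1 : stdPhiBar z ^ 2 * (Real.sqrt (2 * Real.pi) * (Efun z + z * Real.exp (z ^ 2 / 2)))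
      ≤ (stdPhi z / z) ^ 2 * (Real.sqrt (2 * Real.pi) * (2 * z * Real.exp (z ^ 2 / 2))) := by
    refine mul_le_mul (pow_le_pow_left₀ (stdPhiBar_nonneg z) hb 2)
      (mul_le_mul_of_nonneg_left hE (Real.sqrt_nonneg _)) ?_ (by positivity)
    have h5 := Efun_nonneg hz0.le
    have h3 := Real.sqrt_nonneg (2 * Real.pi)
    positivity
  refine h1.trans ?_
  have h6 : (stdPhi z / z) ^ 2 * (Real.sqrt (2 * Real.pi) * (2 * z * Real.exp (z ^ 2 / 2)))
      = 2 * Real.sqrt (2 * Real.pi) * (stdPhi z ^ 2 * Real.exp (z ^ 2 / 2)) / z := by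
    field_simp
  rw [h6, phi_sq_exp]
  rw [div_le_iff₀ hz0]
  have ha : (0:ℝ) ≤ 2 * Real.sqrt (2 * Real.pi) * ((2 * Real.pi)⁻¹ * Real.exp (-z ^ 2 / 2)) := by
    have := Real.pi_pos
    positivity
  exact le_mul_of_one_le_right ha hz

lemma integrableOn_expNegSq : IntegrableOn (fun z : ℝ => Real.exp (-z ^ 2 / 2)) (Set.Ioi 0) := by
  have := integrable_stdPhi.const_mul (Real.sqrt (2 * Real.pi))
  refine (this.congr (Filter.EventuallyEq.of_eq (funext fun z => sqrt_two_pi_phi z))).integrableOn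

lemma integrableOn_Gfun : IntegrableOn Gfun (Set.Ioi 0) := by
  refine Integrable.mono' (integrableOn_zExp.const_mul
    (2 * Real.sqrt (2 * Real.pi) * (2 * Real.pi)⁻¹))
    continuous_Gfun.aestronglyMeasurable.restrict ?_
  filter_upwards [ae_restrict_mem measurableSet_Ioi] with z hz
  rw [Real.norm_eq_abs, abs_of_nonneg (Gfun_nonneg (le_of_lt hz))]
  calc Gfun z ≤ 2 * Real.sqrt (2 * Real.pi) * ((2 * Real.pi)⁻¹
      * (z * Real.exp (-z ^ 2 / 2))) := Gfun_le hz
    _ = 2 * Real.sqrt (2 * Real.pi) * (2 * Real.pi)⁻¹ * (z * Real.exp (-z ^ 2 / 2)) := by ring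

lemma integrableOn_Wfun : IntegrableOn Wfun (Set.Ioi 0) := by
  rw [show Set.Ioi (0:ℝ) = Set.Ioc 0 1 ∪ Set.Ioi 1 from (Set.Ioc_union_Ioi_eq_Ioi zero_le_one).symm,
    integrableOn_union]
  constructor
  · exact continuous_Wfun.integrableOn_Ioc
  · refine Integrable.mono' ((integrableOn_expNegSq.mono_set (Set.Ioi_subset_Ioi zero_le_one)).const_mul
      (2 * Real.sqrt (2 * Real.pi) * (2 * Real.pi)⁻¹))
      continuous_Wfun.aestronglyMeasurable.restrict ?_
    filter_upwards [ae_restrict_mem measurableSet_Ioi] with z hz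
    rw [Real.norm_eq_abs, abs_of_nonneg (Wfun_nonneg (by linarith [hz.out]))]
    calc Wfun z ≤ 2 * Real.sqrt (2 * Real.pi) * ((2 * Real.pi)⁻¹
        * Real.exp (-z ^ 2 / 2)) := Wfun_le (le_of_lt hz)
      _ = 2 * Real.sqrt (2 * Real.pi) * (2 * Real.pi)⁻¹ * Real.exp (-z ^ 2 / 2) := by ring

lemma integral_Wfun_eq_Gfun : ∫ z in Set.Ioi (0:ℝ), Wfun z = ∫ z in Set.Ioi (0:ℝ), Gfun z := by
  have h := integral_Ioi_of_hasDerivAt_of_tendsto (f := Ffun)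
    (f' := fun z => Wfun z - Gfun z) (a := 0) (m := 0)
    continuous_Ffun.continuousWithinAt
    (fun x _ => hasDerivAt_Ffun x)
    (integrableOn_Wfun.sub integrableOn_Gfun)
    tendsto_Ffun
  have hF0 : Ffun 0 = 0 := by
    unfold Ffun
    simp
  rw [hF0, integral_sub integrableOn_Wfun integrableOn_Gfun] at h
  linarith

lemma integrableOn_stdPhiBar_aux :
    IntegrableOn stdPhiBar (Set.Ioi (0:ℝ))
      ∧ ∫ z in Set.Ioi (0:ℝ), stdPhiBar z = stdPhi 0 := by
  have hderiv : ∀ x ∈ Set.Ioi (0:ℝ),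
      HasDerivAt (fun t => t * stdPhiBar t - stdPhi t) (stdPhiBar x) x := by
    intro x _
    have h1 := (hasDerivAt_id x).mul (hasDerivAt_stdPhiBar x)
    have h2 := hasDerivAt_stdPhi x
    have := h1.sub h2
    refine this.congr_deriv ?_
    simp only [id_eq]
    ring
  have hpos : ∀ x ∈ Set.Ioi (0:ℝ), 0 ≤ stdPhiBar x := fun x _ => stdPhiBar_nonneg x
  have hcont : ContinuousWithinAt (fun t => t * stdPhiBar t - stdPhi t) (Set.Ici 0) 0 :=
    ((continuous_id.mul continuous_stdPhiBar).sub continuous_stdPhi).continuousWithinAt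
  have htend : Tendsto (fun t => t * stdPhiBar t - stdPhi t) atTop (𝓝 0) := by
    rw [show (0:ℝ) = 0 - 0 by ring]
    refine Tendsto.sub ?_ tendsto_stdPhi_atTop
    refine tendsto_of_tendsto_of_tendsto_of_le_of_le' tendsto_const_nhds tendsto_stdPhi_atTop ?_ ?_
    · filter_upwards [eventually_gt_atTop (0:ℝ)] with z hz
      exact mul_nonneg hz.le (stdPhiBar_nonneg z)
    · filter_upwards [eventually_gt_atTop (0:ℝ)] with z hz
      have := stdPhiBar_le hz
      rw [div_eq_mul_inv] at this
      calc z * stdPhiBar z ≤ z * (stdPhi z * z⁻¹) :=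
          mul_le_mul_of_nonneg_left (by rwa [mul_comm] at this ⊢) hz.le
        _ = stdPhi z := by field_simp
  refine ⟨integrableOn_Ioi_deriv_of_nonneg hcont hderiv hpos htend, ?_⟩
  rw [integral_Ioi_of_hasDerivAt_of_nonneg hcont hderiv hpos htend]
  simp

lemma integrableOn_stdPhiBar : IntegrableOn stdPhiBar (Set.Ioi (0:ℝ)) :=
  integrableOn_stdPhiBar_aux.1

lemma integral_stdPhiBar : ∫ z in Set.Ioi (0:ℝ), stdPhiBar z = stdPhi 0 :=
  integrableOn_stdPhiBar_aux.2

noncomputable def T1 (z : ℝ) : ℝ := z * Real.exp (-z ^ 2 / 2) * stdPhiBar z * Efun z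
noncomputable def T2 (z : ℝ) : ℝ := Real.exp (-z ^ 2 / 2) * stdPhi z * Efun z

lemma T1_le {z : ℝ} (hz : 0 < z) : T1 z ≤ z * stdPhi z := by
  unfold T1
  have h1 : stdPhiBar z * Efun z ≤ (stdPhi z / z) * (z * Real.exp (z ^ 2 / 2)) :=
    mul_le_mul (stdPhiBar_le hz) (Efun_le hz.le) (Efun_nonneg hz.le)
      (div_nonneg (stdPhi_pos z).le hz.le)
  calc z * Real.exp (-z ^ 2 / 2) * stdPhiBar z * Efun z
      = (z * Real.exp (-z ^ 2 / 2)) * (stdPhiBar z * Efun z) := by ring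
    _ ≤ (z * Real.exp (-z ^ 2 / 2)) * ((stdPhi z / z) * (z * Real.exp (z ^ 2 / 2))) := by
        refine mul_le_mul_of_nonneg_left h1 (by positivity)
    _ = z * stdPhi z * (Real.exp (-z ^ 2 / 2) * Real.exp (z ^ 2 / 2)) := by field_simp
    _ = z * stdPhi z := by
        rw [← Real.exp_add, show -z ^ 2 / 2 + z ^ 2 / 2 = 0 by ring, Real.exp_zero, mul_one]

lemma T2_le {z : ℝ} (hz : 0 < z) : T2 z ≤ z * stdPhi z := by
  unfold T2
  calc Real.exp (-z ^ 2 / 2) * stdPhi z * Efun z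
      ≤ Real.exp (-z ^ 2 / 2) * stdPhi z * (z * Real.exp (z ^ 2 / 2)) := by
        have h0 := (stdPhi_pos z).le
        exact mul_le_mul_of_nonneg_left (Efun_le hz.le) (by positivity)
    _ = z * stdPhi z * (Real.exp (-z ^ 2 / 2) * Real.exp (z ^ 2 / 2)) := by ring
    _ = z * stdPhi z := by
        rw [← Real.exp_add, show -z ^ 2 / 2 + z ^ 2 / 2 = 0 by ring, Real.exp_zero, mul_one]

lemma T1_nonneg {z : ℝ} (hz : 0 ≤ z) : 0 ≤ T1 z := by
  unfold T1
  have := stdPhiBar_nonneg z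
  have := Efun_nonneg hz
  positivity

lemma T2_nonneg {z : ℝ} (hz : 0 ≤ z) : 0 ≤ T2 z := by
  unfold T2
  have := (stdPhi_pos z).le
  have := Efun_nonneg hz
  positivity

lemma continuous_T1 : Continuous T1 := by unfold T1; fun_prop
lemma continuous_T2 : Continuous T2 := by unfold T2; fun_prop

lemma integrableOn_T1 : IntegrableOn T1 (Set.Ioi 0) := by
  refine Integrable.mono' (integrableOn_tail_moment le_rfl)
    continuous_T1.aestronglyMeasurable.restrict ?_
  filter_upwards [ae_restrict_mem measurableSet_Ioi] with z hz
  rw [Real.norm_eq_abs, abs_of_nonneg (T1_nonneg hz.out.le)]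
  exact T1_le hz

lemma integrableOn_T2 : IntegrableOn T2 (Set.Ioi 0) := by
  refine Integrable.mono' (integrableOn_tail_moment le_rfl)
    continuous_T2.aestronglyMeasurable.restrict ?_
  filter_upwards [ae_restrict_mem measurableSet_Ioi] with z hz
  rw [Real.norm_eq_abs, abs_of_nonneg (T2_nonneg hz.out.le)]
  exact T2_le hz

lemma integral_T1 :
    ∫ z in Set.Ioi (0:ℝ), T1 z
      = (∫ z in Set.Ioi (0:ℝ), stdPhiBar z) - ∫ z in Set.Ioi (0:ℝ), T2 z := by
  have hderiv : ∀ x ∈ Set.Ioi (0:ℝ),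
      HasDerivAt (fun z => -(Real.exp (-z ^ 2 / 2) * stdPhiBar z * Efun z))
        (T1 x + T2 x - stdPhiBar x) x := by
    intro x _
    have he : HasDerivAt (fun z : ℝ => Real.exp (-z ^ 2 / 2)) (-x * Real.exp (-x ^ 2 / 2)) x := by
      have h : HasDerivAt (fun z : ℝ => -z ^ 2 / 2) (-x) x := by
        have := (hasDerivAt_pow 2 x).neg.div_const 2
        refine this.congr_deriv ?_
        push_cast; ring
      have := h.exp
      refine this.congr_deriv ?_
      ring
    have h1 := (he.mul (hasDerivAt_stdPhiBar x)).mul (hasDerivAt_Efun x)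
    have h2 := h1.neg
    refine h2.congr_deriv ?_
    unfold T1 T2
    have hee : Real.exp (-x ^ 2 / 2) * Real.exp (x ^ 2 / 2) = 1 := by
      rw [← Real.exp_add, show -x ^ 2 / 2 + x ^ 2 / 2 = 0 by ring, Real.exp_zero]
    simp only [Pi.mul_apply]
    linear_combination -(stdPhiBar x) * hee
  have hcont : ContinuousWithinAt (fun z => -(Real.exp (-z ^ 2 / 2) * stdPhiBar z * Efun z))
      (Set.Ici 0) 0 := by
    refine Continuous.continuousWithinAt ?_
    fun_prop
  have htend : Tendsto (fun z => -(Real.exp (-z ^ 2 / 2) * stdPhiBar z * Efun z)) atTop (𝓝 0) := by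
    rw [show (0:ℝ) = -0 by ring]
    refine Tendsto.neg ?_
    refine tendsto_of_tendsto_of_tendsto_of_le_of_le' tendsto_const_nhds tendsto_stdPhi_atTop ?_ ?_
    · filter_upwards [eventually_gt_atTop (0:ℝ)] with z hz
      have := stdPhiBar_nonneg z
      have := Efun_nonneg hz.le
      positivity
    · filter_upwards [eventually_gt_atTop (0:ℝ)] with z hz
      have hb : stdPhiBar z * Efun z ≤ (stdPhi z / z) * (z * Real.exp (z ^ 2 / 2)) :=
        mul_le_mul (stdPhiBar_le hz) (Efun_le hz.le) (Efun_nonneg hz.le)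
          (div_nonneg (stdPhi_pos z).le hz.le)
      calc Real.exp (-z ^ 2 / 2) * stdPhiBar z * Efun z
          = Real.exp (-z ^ 2 / 2) * (stdPhiBar z * Efun z) := by ring
        _ ≤ Real.exp (-z ^ 2 / 2) * ((stdPhi z / z) * (z * Real.exp (z ^ 2 / 2))) :=
            mul_le_mul_of_nonneg_left hb (by positivity)
        _ = stdPhi z * (Real.exp (-z ^ 2 / 2) * Real.exp (z ^ 2 / 2)) := by field_simp
        _ = stdPhi z := by
            rw [← Real.exp_add, show -z ^ 2 / 2 + z ^ 2 / 2 = 0 by ring, Real.exp_zero, mul_one]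
  have hint : IntegrableOn (fun x => T1 x + T2 x - stdPhiBar x) (Set.Ioi (0:ℝ)) :=
    (integrableOn_T1.add integrableOn_T2).sub integrableOn_stdPhiBar
  have h := integral_Ioi_of_hasDerivAt_of_tendsto hcont hderiv hint htend
  have h0 : -(Real.exp (-(0:ℝ) ^ 2 / 2) * stdPhiBar 0 * Efun 0) = 0 := by
    rw [Efun_zero]; ring
  rw [h0, sub_zero] at h
  have hI : IntegrableOn (fun x => T1 x + T2 x) (Set.Ioi (0:ℝ)) :=
    integrableOn_T1.add integrableOn_T2
  rw [MeasureTheory.integral_sub hI integrableOn_stdPhiBar,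
    MeasureTheory.integral_add integrableOn_T1 integrableOn_T2] at h
  linarith

lemma sqrt_two_pos : (0:ℝ) < Real.sqrt 2 := Real.sqrt_pos.mpr (by norm_num)

lemma one_lt_sqrt_two : (1:ℝ) < Real.sqrt 2 := by
  have : (1:ℝ) = Real.sqrt 1 := (Real.sqrt_one).symm
  rw [this]
  exact Real.sqrt_lt_sqrt (by norm_num) (by norm_num)

lemma integral_inv_two_sub_sq :
    ∫ s in (0:ℝ)..1, (2 - s ^ 2)⁻¹ = Real.log (1 + Real.sqrt 2) / Real.sqrt 2 := by
  have key : ∀ s ∈ Set.uIcc (0:ℝ) 1,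
      HasDerivAt (fun s => (2 * Real.sqrt 2)⁻¹
        * (Real.log (Real.sqrt 2 + s) - Real.log (Real.sqrt 2 - s))) ((2 - s ^ 2)⁻¹) s := by
    intro s hs
    rw [Set.uIcc_of_le (by norm_num)] at hs
    have hs0 : 0 ≤ s := hs.1
    have hs1 : s ≤ 1 := hs.2
    have hp : 0 < Real.sqrt 2 + s := by linarith [sqrt_two_pos]
    have hm : 0 < Real.sqrt 2 - s := by linarith [_root_.one_lt_sqrt_two]
    have h1 : HasDerivAt (fun s : ℝ => Real.log (Real.sqrt 2 + s)) ((Real.sqrt 2 + s)⁻¹) s := by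
      have := ((hasDerivAt_id s).const_add (Real.sqrt 2)).log (ne_of_gt hp)
      simpa using this
    have h2 : HasDerivAt (fun s : ℝ => Real.log (Real.sqrt 2 - s)) (-(Real.sqrt 2 - s)⁻¹) s := by
      have := ((hasDerivAt_id s).const_sub (Real.sqrt 2)).log (ne_of_gt hm)
      simpa [neg_div, div_eq_mul_inv] using this
    have h3 := ((h1.sub h2).const_mul ((2 * Real.sqrt 2)⁻¹))
    refine h3.congr_deriv ?_
    have h2s : Real.sqrt 2 ^ 2 = 2 := Real.sq_sqrt (by norm_num)
    have hne : (2:ℝ) - s ^ 2 ≠ 0 := by nlinarith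
    field_simp
    nlinarith [sqrt_two_pos]
  have hcont : IntervalIntegrable (fun s : ℝ => (2 - s ^ 2)⁻¹) volume 0 1 := by
    refine ContinuousOn.intervalIntegrable ?_
    refine ContinuousOn.inv₀ (by fun_prop) ?_
    intro s hs
    rw [Set.uIcc_of_le (by norm_num)] at hs
    nlinarith [hs.1, hs.2]
  rw [intervalIntegral.integral_eq_sub_of_hasDerivAt key hcont]
  have hlog : Real.log (Real.sqrt 2 - 1) = -Real.log (Real.sqrt 2 + 1) := by
    rw [← Real.log_inv]
    congr 1
    have h2s : Real.sqrt 2 ^ 2 = 2 := Real.sq_sqrt (by norm_num)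
    field_simp
    nlinarith
  rw [hlog]
  rw [show Real.sqrt 2 + (1:ℝ) = 1 + Real.sqrt 2 by ring, add_zero, sub_zero, sub_self]
  field_simp
  ring

lemma z_exp_neg_aux {c : ℝ} (hc : 0 < c) :
    IntegrableOn (fun z : ℝ => z * Real.exp (-(c * z ^ 2))) (Set.Ioi 0)
      ∧ ∫ z in Set.Ioi (0:ℝ), z * Real.exp (-(c * z ^ 2)) = (2 * c)⁻¹ := by
  have hderiv : ∀ x ∈ Set.Ioi (0:ℝ),
      HasDerivAt (fun z => -(2 * c)⁻¹ * Real.exp (-(c * z ^ 2)))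
        (x * Real.exp (-(c * x ^ 2))) x := by
    intro x _
    have h : HasDerivAt (fun z : ℝ => -(c * z ^ 2)) (-(2 * c * x)) x := by
      have := ((hasDerivAt_pow 2 x).const_mul c).neg
      refine this.congr_deriv ?_
      push_cast; ring
    have := h.exp.const_mul (-(2 * c)⁻¹)
    refine this.congr_deriv ?_
    field_simp
  have hpos : ∀ x ∈ Set.Ioi (0:ℝ), 0 ≤ x * Real.exp (-(c * x ^ 2)) := by
    intro x hx
    have := hx.out.le
    positivity
  have hcont : ContinuousWithinAt (fun z : ℝ => -(2 * c)⁻¹ * Real.exp (-(c * z ^ 2)))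
      (Set.Ici 0) 0 := Continuous.continuousWithinAt (by fun_prop)
  have htend : Tendsto (fun z : ℝ => -(2 * c)⁻¹ * Real.exp (-(c * z ^ 2))) atTop (𝓝 0) := by
    rw [show (0:ℝ) = -(2 * c)⁻¹ * 0 by ring]
    refine Tendsto.const_mul _ ?_
    refine Real.tendsto_exp_atBot.comp ?_
    have h : Tendsto (fun z : ℝ => c * z ^ 2) atTop atTop :=
      (tendsto_pow_atTop (by norm_num)).const_mul_atTop hc
    exact tendsto_neg_atBot_iff.mpr h
  refine ⟨integrableOn_Ioi_deriv_of_nonneg hcont hderiv hpos htend, ?_⟩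
  rw [integral_Ioi_of_hasDerivAt_of_nonneg hcont hderiv hpos htend]
  norm_num

lemma Efun_scale {z : ℝ} (hz : 0 < z) :
    Real.exp (-z ^ 2) * Efun z
      = ∫ s in (0:ℝ)..1, z * Real.exp (-((1 - s ^ 2 / 2) * z ^ 2)) := by
  have h1 : ∀ s : ℝ, z * Real.exp (-((1 - s ^ 2 / 2) * z ^ 2))
      = (z * Real.exp (-z ^ 2)) * Real.exp ((z * s) ^ 2 / 2) := by
    intro s
    rw [mul_assoc, ← Real.exp_add]
    congr 2
    ring
  simp only [h1]
  rw [intervalIntegral.integral_const_mul]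
  have h2 := intervalIntegral.integral_comp_mul_left
    (f := fun t => Real.exp (t ^ 2 / 2)) (a := (0:ℝ)) (b := 1) (c := z) (ne_of_gt hz)
  rw [h2]
  rw [mul_zero, mul_one, smul_eq_mul]
  rw [show (∫ t in (0:ℝ)..z, Real.exp (t ^ 2 / 2)) = Efun z from rfl]
  field_simp

lemma measurable_ofReal_of_continuous {α : Type*} [TopologicalSpace α] [MeasurableSpace α]
    [OpensMeasurableSpace α] {f : α → ℝ} (hf : Continuous f) :
    Measurable (fun p => ENNReal.ofReal (f p)) :=
  (ENNReal.continuous_ofReal.comp hf).measurable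

lemma lintegral_Jp :
    ∫⁻ z in Set.Ioi (0:ℝ), ENNReal.ofReal (Real.exp (-z ^ 2) * Efun z)
      = ENNReal.ofReal (Real.log (1 + Real.sqrt 2) / Real.sqrt 2) := by
  have hmeas : Measurable (Function.uncurry fun (z s : ℝ) =>
      ENNReal.ofReal (z * Real.exp (-((1 - s ^ 2 / 2) * z ^ 2)))) := by
    refine measurable_ofReal_of_continuous ?_
    fun_prop
  have step1 : ∫⁻ z in Set.Ioi (0:ℝ), ENNReal.ofReal (Real.exp (-z ^ 2) * Efun z)
      = ∫⁻ z in Set.Ioi (0:ℝ), ∫⁻ s in Set.Ioc (0:ℝ) 1,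
          ENNReal.ofReal (z * Real.exp (-((1 - s ^ 2 / 2) * z ^ 2))) := by
    refine setLIntegral_congr_fun measurableSet_Ioi (fun z hz => ?_)
    have hz : (0:ℝ) < z := hz
    have hInt : IntegrableOn (fun s : ℝ => z * Real.exp (-((1 - s ^ 2 / 2) * z ^ 2)))
        (Set.Ioc 0 1) := Continuous.integrableOn_Ioc (by fun_prop)
    rw [Efun_scale hz, intervalIntegral.integral_of_le zero_le_one,
      MeasureTheory.ofReal_integral_eq_lintegral_ofReal hInt
        (ae_of_all _ fun s => by positivity)]
  have step2 : ∫⁻ z in Set.Ioi (0:ℝ), ∫⁻ s in Set.Ioc (0:ℝ) 1,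
          ENNReal.ofReal (z * Real.exp (-((1 - s ^ 2 / 2) * z ^ 2)))
      = ∫⁻ s in Set.Ioc (0:ℝ) 1, ∫⁻ z in Set.Ioi (0:ℝ),
          ENNReal.ofReal (z * Real.exp (-((1 - s ^ 2 / 2) * z ^ 2))) :=
    MeasureTheory.lintegral_lintegral_swap hmeas.aemeasurable
  have step3 : ∫⁻ s in Set.Ioc (0:ℝ) 1, ∫⁻ z in Set.Ioi (0:ℝ),
          ENNReal.ofReal (z * Real.exp (-((1 - s ^ 2 / 2) * z ^ 2)))
      = ∫⁻ s in Set.Ioc (0:ℝ) 1, ENNReal.ofReal ((2 - s ^ 2)⁻¹) := by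
    refine setLIntegral_congr_fun measurableSet_Ioc (fun s hs => ?_)
    have hc : (0:ℝ) < 1 - s ^ 2 / 2 := by nlinarith [hs.1, hs.2]
    have haux := z_exp_neg_aux hc
    have hnn : 0 ≤ᵐ[volume.restrict (Set.Ioi (0:ℝ))]
        fun z => z * Real.exp (-((1 - s ^ 2 / 2) * z ^ 2)) := by
      filter_upwards [ae_restrict_mem measurableSet_Ioi] with z hz
      have := hz.out.le
      positivity
    rw [← MeasureTheory.ofReal_integral_eq_lintegral_ofReal haux.1 hnn, haux.2]
    congr 1
    rw [show (2:ℝ) - s ^ 2 = 2 * (1 - s ^ 2 / 2) by ring]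
  have hInt4 : IntegrableOn (fun s : ℝ => (2 - s ^ 2)⁻¹) (Set.Ioc 0 1) := by
    refine (ContinuousOn.integrableOn_Icc ?_).mono_set Set.Ioc_subset_Icc_self
    refine ContinuousOn.inv₀ (by fun_prop) ?_
    intro s hs
    nlinarith [hs.1, hs.2]
  have step4 : ∫⁻ s in Set.Ioc (0:ℝ) 1, ENNReal.ofReal ((2 - s ^ 2)⁻¹)
      = ENNReal.ofReal (Real.log (1 + Real.sqrt 2) / Real.sqrt 2) := by
    have hnn : 0 ≤ᵐ[volume.restrict (Set.Ioc (0:ℝ) 1)] fun s : ℝ => (2 - s ^ 2)⁻¹ := by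
      filter_upwards [ae_restrict_mem measurableSet_Ioc] with s hs
      have h1 : (0:ℝ) < 2 - s ^ 2 := by nlinarith [hs.1, hs.2]
      positivity
    rw [← MeasureTheory.ofReal_integral_eq_lintegral_ofReal hInt4 hnn]
    congr 1
    rw [← intervalIntegral.integral_of_le zero_le_one, integral_inv_two_sub_sq]
  rw [step1, step2, step3, step4]

lemma exp_neg_Efun_eq : ∀ z : ℝ, Real.exp (-z ^ 2) * Efun z = Real.sqrt (2 * Real.pi) * T2 z := by
  intro z
  unfold T2
  rw [show Real.sqrt (2 * Real.pi) * (Real.exp (-z ^ 2 / 2) * stdPhi z * Efun z)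
    = (Real.exp (-z ^ 2 / 2) * (Real.sqrt (2 * Real.pi) * stdPhi z)) * Efun z by ring,
    sqrt_two_pi_phi, ← Real.exp_add]
  congr 2
  ring

lemma integrableOn_exp_neg_Efun :
    IntegrableOn (fun z : ℝ => Real.exp (-z ^ 2) * Efun z) (Set.Ioi 0) := by
  refine ((integrableOn_T2.const_mul (Real.sqrt (2 * Real.pi))).congr
    (Filter.EventuallyEq.of_eq (funext fun z => (exp_neg_Efun_eq z).symm)))

lemma integral_Jp :
    ∫ z in Set.Ioi (0:ℝ), Real.exp (-z ^ 2) * Efun z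
      = Real.log (1 + Real.sqrt 2) / Real.sqrt 2 := by
  have hnn : 0 ≤ᵐ[volume.restrict (Set.Ioi (0:ℝ))] fun z : ℝ => Real.exp (-z ^ 2) * Efun z := by
    filter_upwards [ae_restrict_mem measurableSet_Ioi] with z hz
    have := Efun_nonneg hz.out.le
    positivity
  have h := MeasureTheory.ofReal_integral_eq_lintegral_ofReal integrableOn_exp_neg_Efun hnn
  rw [lintegral_Jp] at h
  have h1 : 0 ≤ ∫ z in Set.Ioi (0:ℝ), Real.exp (-z ^ 2) * Efun z :=
    MeasureTheory.integral_nonneg_of_ae hnn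
  have h2 : 0 ≤ Real.log (1 + Real.sqrt 2) / Real.sqrt 2 := by
    refine div_nonneg (Real.log_nonneg (by linarith [sqrt_two_pos])) sqrt_two_pos.le
  exact (ENNReal.ofReal_eq_ofReal_iff h1 h2).mp h

lemma integral_T2 :
    ∫ z in Set.Ioi (0:ℝ), T2 z
      = (Real.sqrt (2 * Real.pi))⁻¹ * (Real.log (1 + Real.sqrt 2) / Real.sqrt 2) := by
  have h : ∀ z : ℝ, T2 z = (Real.sqrt (2 * Real.pi))⁻¹ * (Real.exp (-z ^ 2) * Efun z) := by
    intro z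
    rw [exp_neg_Efun_eq z, ← mul_assoc, inv_mul_cancel₀ (by positivity), one_mul]
  simp only [h]
  rw [MeasureTheory.integral_const_mul, integral_Jp]

lemma integral_Wfun_value :
    ∫ z in Set.Ioi (0:ℝ), Wfun z
      = 2 * (stdPhi 0 - (Real.sqrt (2 * Real.pi))⁻¹ * (Real.log (1 + Real.sqrt 2) / Real.sqrt 2)) := by
  have hG : ∀ z : ℝ, Gfun z = 2 * T1 z := by
    intro z
    unfold Gfun T1
    rw [show 2 * stdPhiBar z * stdPhi z * (Real.sqrt (2 * Real.pi) * (z * Efun z))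
      = 2 * ((Real.sqrt (2 * Real.pi) * stdPhi z) * (z * stdPhiBar z * Efun z)) by ring,
      sqrt_two_pi_phi]
    ring
  rw [integral_Wfun_eq_Gfun]
  simp only [hG]
  rw [MeasureTheory.integral_const_mul, integral_T1, integral_stdPhiBar, integral_T2]

lemma measurable_ofReal_div :
    Measurable (fun p : ℝ × ℝ => ENNReal.ofReal (stdPhiBar (|p.2 - p.1| + p.1) ^ 2 / stdPhi p.2)) := by
  refine measurable_ofReal_of_continuous ?_
  refine Continuous.div ?_ ?_ (fun p => (stdPhi_pos p.2).ne')
  · fun_prop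
  · fun_prop

lemma inner_split {y : ℝ} (hy : 0 < y) :
    ∫⁻ z, ENNReal.ofReal (stdPhiBar (|z - y| + y) ^ 2 / stdPhi z)
      = ∫⁻ z in Set.Ioi y, (ENNReal.ofReal (stdPhiBar z ^ 2 / stdPhi z)
          + ENNReal.ofReal (stdPhiBar z ^ 2 / stdPhi (2 * y - z))) := by
  set f : ℝ → ℝ≥0∞ := fun z => ENNReal.ofReal (stdPhiBar (|z - y| + y) ^ 2 / stdPhi z) with hf
  have hfm : Measurable f := by
    have := measurable_ofReal_div.comp (f := fun z : ℝ => ((y, z) : ℝ × ℝ))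
      (measurable_const.prodMk measurable_id)
    exact this
  have hsplit : (∫⁻ z in Set.Iic y, f z) + ∫⁻ z in Set.Ioi y, f z = ∫⁻ z, f z := by
    have := MeasureTheory.lintegral_add_compl (μ := volume) f (measurableSet_Iic (a := y))
    rwa [Set.compl_Iic] at this
  rw [← hsplit]
  -- reflected part
  have hmp : MeasurePreserving (fun x : ℝ => 2 * y - x) volume volume :=
    Measure.measurePreserving_sub_left volume (2 * y)
  have hrefl : (∫⁻ z in Set.Iic y, f z)
      = ∫⁻ z in Set.Ioi y, ENNReal.ofReal (stdPhiBar z ^ 2 / stdPhi (2 * y - z)) := by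
    have hpre : (fun x : ℝ => 2 * y - x) ⁻¹' (Set.Iio y) = Set.Ioi y := by
      ext x
      simp only [Set.mem_preimage, Set.mem_Iio, Set.mem_Ioi]
      constructor <;> intro h <;> linarith
    have hIio : ∫⁻ z in Set.Iic y, f z = ∫⁻ z in Set.Iio y, f z :=
      (MeasureTheory.setLIntegral_congr (MeasureTheory.Iio_ae_eq_Iic (a := y))).symm
    have h1 := hmp.setLIntegral_comp_preimage (s := Set.Iio y) measurableSet_Iio hfm
    rw [hpre] at h1
    rw [hIio, ← h1]
    refine setLIntegral_congr_fun measurableSet_Ioi (fun z hz => ?_)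
    have hz : y < z := hz
    rw [hf]
    simp only []
    congr 2
    rw [show 2 * y - z - y = -(z - y) by ring, abs_neg, abs_of_pos (by linarith)]
    ring
  have hright : (∫⁻ z in Set.Ioi y, f z)
      = ∫⁻ z in Set.Ioi y, ENNReal.ofReal (stdPhiBar z ^ 2 / stdPhi z) := by
    refine setLIntegral_congr_fun measurableSet_Ioi (fun z hz => ?_)
    have hz : y < z := hz
    rw [hf]
    simp only []
    congr 3
    rw [abs_of_pos (by linarith)]
    ring
  rw [hrefl, hright]
  rw [← MeasureTheory.lintegral_add_left (by
    exact (measurable_ofReal_of_continuous (f := fun z : ℝ => stdPhiBar z ^ 2 / stdPhi (2 * y - z))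
      (Continuous.div (by fun_prop) (by fun_prop) fun z => (stdPhi_pos (2 * y - z)).ne'))) _]
  exact lintegral_congr fun a => add_comm _ _

lemma lintegral_triangle_swap (F : ℝ → ℝ → ℝ≥0∞)
    (hF : Measurable (Function.uncurry F)) :
    ∫⁻ y in Set.Ioi (0:ℝ), ∫⁻ z in Set.Ioi y, F y z
      = ∫⁻ z in Set.Ioi (0:ℝ), ∫⁻ y in Set.Ioo 0 z, F y z := by
  have hGm : Measurable (Function.uncurry fun (y z : ℝ) =>
      Set.indicator {p : ℝ × ℝ | p.1 < p.2} (Function.uncurry F) (y, z)) := by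
    refine hF.indicator ?_
    exact measurableSet_lt measurable_fst measurable_snd
  have h1 : ∀ y : ℝ, (∫⁻ z in Set.Ioi y, F y z)
      = ∫⁻ z, Set.indicator {p : ℝ × ℝ | p.1 < p.2} (Function.uncurry F) (y, z) := by
    intro y
    rw [← MeasureTheory.lintegral_indicator measurableSet_Ioi]
    refine lintegral_congr fun z => ?_
    by_cases h : y < z
    · rw [Set.indicator_of_mem (by exact h), Set.indicator_of_mem (by exact h)]
      rfl
    · rw [Set.indicator_of_notMem (by exact h), Set.indicator_of_notMem (by exact h)]
  have h2 : ∀ z : ℝ, (∫⁻ y in Set.Ioi 0,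
        Set.indicator {p : ℝ × ℝ | p.1 < p.2} (Function.uncurry F) (y, z))
      = ∫⁻ y in Set.Ioo 0 z, F y z := by
    intro z
    have hptw : ∀ y : ℝ, Set.indicator {p : ℝ × ℝ | p.1 < p.2} (Function.uncurry F) (y, z)
        = Set.indicator (Set.Iio z) (fun y => F y z) y := by
      intro y
      by_cases h : y < z
      · rw [Set.indicator_of_mem (by exact h), Set.indicator_of_mem (Set.mem_Iio.mpr h)]
        rfl
      · rw [Set.indicator_of_notMem (by exact h),
          Set.indicator_of_notMem (by simpa using h)]
    simp only [hptw]
    rw [MeasureTheory.lintegral_indicator (μ := volume.restrict (Set.Ioi 0)) measurableSet_Iio,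
      Measure.restrict_restrict measurableSet_Iio,
      show Set.Iio z ∩ Set.Ioi 0 = Set.Ioo 0 z from by ext x; simp [and_comm]]
  simp only [h1]
  rw [MeasureTheory.lintegral_lintegral_swap (by exact hGm.aemeasurable)]
  rw [← MeasureTheory.lintegral_indicator (μ := volume)
    (measurableSet_Ioi (a := (0:ℝ)))]
  refine lintegral_congr fun z => ?_
  by_cases hz : (0:ℝ) < z
  · rw [Set.indicator_of_mem (by exact hz)]
    exact h2 z
  · rw [Set.indicator_of_notMem (by exact hz)]
    rw [h2 z]
    rw [show Set.Ioo (0:ℝ) z = ∅ from Set.Ioo_eq_empty hz]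
    simp

lemma inner_y {z : ℝ} (hz : 0 < z) :
    ∫⁻ y in Set.Ioo (0:ℝ) z, (ENNReal.ofReal (stdPhiBar z ^ 2 / stdPhi z)
        + ENNReal.ofReal (stdPhiBar z ^ 2 / stdPhi (2 * y - z)))
      = ENNReal.ofReal (Wfun z) := by
  rw [MeasureTheory.lintegral_add_left measurable_const]
  have hconst : ∫⁻ _y in Set.Ioo (0:ℝ) z, ENNReal.ofReal (stdPhiBar z ^ 2 / stdPhi z)
      = ENNReal.ofReal (z * (stdPhiBar z ^ 2 / stdPhi z)) := by
    rw [MeasureTheory.setLIntegral_const, Real.volume_Ioo, sub_zero,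
      ← ENNReal.ofReal_mul (div_nonneg (sq_nonneg _) (stdPhi_pos z).le), mul_comm]
  have hInt : IntegrableOn (fun y : ℝ => stdPhiBar z ^ 2 / stdPhi (2 * y - z))
      (Set.Ioo 0 z) := by
    refine (Continuous.integrableOn_Ioc ?_).mono_set Set.Ioo_subset_Ioc_self
    exact Continuous.div (by fun_prop) (by fun_prop) fun y => (stdPhi_pos (2 * y - z)).ne'
  have hvar : ∫⁻ y in Set.Ioo (0:ℝ) z, ENNReal.ofReal (stdPhiBar z ^ 2 / stdPhi (2 * y - z))
      = ENNReal.ofReal (stdPhiBar z ^ 2 * (Real.sqrt (2 * Real.pi) * Efun z)) := by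
    rw [← MeasureTheory.ofReal_integral_eq_lintegral_ofReal hInt
      (ae_of_all _ fun y => div_nonneg (sq_nonneg _) (stdPhi_pos _).le)]
    congr 1
    rw [← MeasureTheory.integral_Ioc_eq_integral_Ioo,
      ← intervalIntegral.integral_of_le hz.le]
    simp only [div_eq_mul_inv]
    rw [intervalIntegral.integral_const_mul, int_inv_phi hz]
  rw [hconst, hvar, ← ENNReal.ofReal_add
    (mul_nonneg hz.le (div_nonneg (sq_nonneg _) (stdPhi_pos z).le))
    (mul_nonneg (sq_nonneg _) (mul_nonneg (Real.sqrt_nonneg _) (Efun_nonneg hz.le)))]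
  congr 1
  unfold Wfun
  rw [div_eq_mul_inv, stdPhi_inv]
  ring

lemma lintegral_L :
    ∫⁻ y in Set.Ioi (0:ℝ), ∫⁻ z, ENNReal.ofReal (stdPhiBar (|z - y| + y) ^ 2 / stdPhi z)
      = ENNReal.ofReal (∫ z in Set.Ioi (0:ℝ), Wfun z) := by
  have step1 : ∫⁻ y in Set.Ioi (0:ℝ), ∫⁻ z,
        ENNReal.ofReal (stdPhiBar (|z - y| + y) ^ 2 / stdPhi z)
      = ∫⁻ y in Set.Ioi (0:ℝ), ∫⁻ z in Set.Ioi y,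
          (ENNReal.ofReal (stdPhiBar z ^ 2 / stdPhi z)
            + ENNReal.ofReal (stdPhiBar z ^ 2 / stdPhi (2 * y - z))) :=
    setLIntegral_congr_fun measurableSet_Ioi (fun y hy => inner_split hy)
  have hFm : Measurable (Function.uncurry fun (y z : ℝ) =>
      ENNReal.ofReal (stdPhiBar z ^ 2 / stdPhi z)
        + ENNReal.ofReal (stdPhiBar z ^ 2 / stdPhi (2 * y - z))) := by
    refine Measurable.fun_add ?_ ?_
    · exact measurable_ofReal_of_continuous
        (Continuous.div (by fun_prop) (by fun_prop)
          fun p : ℝ × ℝ => (stdPhi_pos p.2).ne')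
    · exact measurable_ofReal_of_continuous
        (Continuous.div (by fun_prop) (by fun_prop)
          fun p : ℝ × ℝ => (stdPhi_pos (2 * p.1 - p.2)).ne')
  rw [step1, lintegral_triangle_swap _ hFm]
  have step3 : ∫⁻ z in Set.Ioi (0:ℝ), ∫⁻ y in Set.Ioo 0 z,
        (ENNReal.ofReal (stdPhiBar z ^ 2 / stdPhi z)
          + ENNReal.ofReal (stdPhiBar z ^ 2 / stdPhi (2 * y - z)))
      = ∫⁻ z in Set.Ioi (0:ℝ), ENNReal.ofReal (Wfun z) :=
    setLIntegral_congr_fun measurableSet_Ioi (fun z hz => inner_y hz)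
  rw [step3]
  rw [← MeasureTheory.ofReal_integral_eq_lintegral_ofReal integrableOn_Wfun ?_]
  filter_upwards [ae_restrict_mem measurableSet_Ioi] with z hz
  exact Wfun_nonneg hz.out.le

/-- `∫₀^∞ ∫_ℝ Φ̄(|z-y|+y)²/φ(z) dz dy = (√2 - log(1+√2))/√π`. -/
theorem stmt8 :
    (∫ y in Set.Ioi (0:ℝ), ∫ z : ℝ, stdPhiBar (|z - y| + y) ^ 2 / stdPhi z) =
      (Real.sqrt 2 - Real.log (1 + Real.sqrt 2)) / Real.sqrt Real.pi := by
  have hcont2 : Continuous (fun p : ℝ × ℝ => stdPhiBar (|p.2 - p.1| + p.1) ^ 2 / stdPhi p.2) :=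
    Continuous.div (by fun_prop) (by fun_prop) fun p => (stdPhi_pos p.2).ne'
  have h1 : ∀ y : ℝ, (∫ z : ℝ, stdPhiBar (|z - y| + y) ^ 2 / stdPhi z)
      = (∫⁻ z, ENNReal.ofReal (stdPhiBar (|z - y| + y) ^ 2 / stdPhi z)).toReal := by
    intro y
    have hmeas : AEStronglyMeasurable (fun z : ℝ => stdPhiBar (|z - y| + y) ^ 2 / stdPhi z)
        volume := by
      refine Continuous.aestronglyMeasurable ?_
      exact Continuous.div (by fun_prop) (by fun_prop) fun z => (stdPhi_pos z).ne'
    exact MeasureTheory.integral_eq_lintegral_of_nonneg_ae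
      (ae_of_all _ fun z => div_nonneg (sq_nonneg _) (stdPhi_pos z).le) hmeas
  have hgm : Measurable (fun y => ∫⁻ z,
      ENNReal.ofReal (stdPhiBar (|z - y| + y) ^ 2 / stdPhi z)) := by
    refine Measurable.lintegral_prod_right (f := fun (y z : ℝ) =>
      ENNReal.ofReal (stdPhiBar (|z - y| + y) ^ 2 / stdPhi z)) ?_
    exact measurable_ofReal_div
  have hfin : ∀ᵐ y ∂(volume.restrict (Set.Ioi (0:ℝ))), (∫⁻ z,
      ENNReal.ofReal (stdPhiBar (|z - y| + y) ^ 2 / stdPhi z)) < ⊤ := by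
    refine ae_lt_top hgm ?_
    rw [lintegral_L]
    exact ENNReal.ofReal_ne_top
  have hint : ∫ z in Set.Ioi (0:ℝ), Wfun z
      = (Real.sqrt 2 - Real.log (1 + Real.sqrt 2)) / Real.sqrt Real.pi := by
    rw [integral_Wfun_value]
    have hphi0 : stdPhi 0 = (Real.sqrt (2 * Real.pi))⁻¹ := by
      unfold stdPhi
      norm_num
    rw [hphi0, Real.sqrt_mul (by norm_num) Real.pi]
    have ha : (0:ℝ) < Real.sqrt 2 := sqrt_two_pos
    have hb : (0:ℝ) < Real.sqrt Real.pi := Real.sqrt_pos.mpr Real.pi_pos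
    have h2 : Real.sqrt 2 ^ 2 = 2 := Real.sq_sqrt (by norm_num)
    generalize Real.sqrt 2 = a at *
    generalize Real.sqrt Real.pi = b at *
    generalize Real.log (1 + a) = l
    field_simp
    linear_combination (l - a) * h2
  calc (∫ y in Set.Ioi (0:ℝ), ∫ z : ℝ, stdPhiBar (|z - y| + y) ^ 2 / stdPhi z)
      = ∫ y in Set.Ioi (0:ℝ), (∫⁻ z,
          ENNReal.ofReal (stdPhiBar (|z - y| + y) ^ 2 / stdPhi z)).toReal := by
        simp only [h1]
    _ = (∫⁻ y in Set.Ioi (0:ℝ), ∫⁻ z,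
          ENNReal.ofReal (stdPhiBar (|z - y| + y) ^ 2 / stdPhi z)).toReal :=
        MeasureTheory.integral_toReal hgm.aemeasurable hfin
    _ = (ENNReal.ofReal (∫ z in Set.Ioi (0:ℝ), Wfun z)).toReal := by rw [lintegral_L]
    _ = ∫ z in Set.Ioi (0:ℝ), Wfun z :=
        ENNReal.toReal_ofReal (setIntegral_nonneg measurableSet_Ioi
          fun z hz => Wfun_nonneg (le_of_lt hz))
    _ = (Real.sqrt 2 - Real.log (1 + Real.sqrt 2)) / Real.sqrt Real.pi := hint
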